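/- (Multivariate Raabe multiplication theorem, Euler case) For every odd positive integer m, every natural number n, every positive integer k, every vector a = (a₁, …, a_k) of nonzero real numbers, and every real number x, m^{-n} · E_n^{(k)}(m x | a) = Σ_{l₁=0}^{m-1} ⋯ Σ_{l_k=0}^{m-1} (-1)^{l₁ + ⋯ + l_k} E_n^{(k)}( x + (1/m) Σ_{i=1}^{k} a_i l_i | a ). -/

import Mathlib

open PowerSeries Finset

private lemma rescale_C' (c r : ℝ) : rescale c (PowerSeries.C r) = PowerSeries.C r := by
  ext n
  rw [coeff_rescale]
  rcases n with _ | n <;> simp [coeff_C]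

private lemma prod_rescale_exp {ι : Type*} (s : Finset ι) (c : ι → ℝ) :
    ∏ i ∈ s, rescale (c i) (exp ℝ) = rescale (∑ i ∈ s, c i) (exp ℝ) := by
  induction s using Finset.cons_induction with
  | empty => simp [rescale_zero, constantCoeff_exp]
  | cons a s h ih =>
      rw [Finset.prod_cons, Finset.sum_cons, ih, exp_mul_exp_eq_exp_add]

private lemma rescale_exp_pow (c : ℝ) (l : ℕ) :
    (rescale c (exp ℝ)) ^ l = rescale ((l : ℝ) * c) (exp ℝ) := by
  rw [← map_pow, exp_pow_eq_rescale_exp, rescale_rescale]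

private lemma euler_geom (c : ℝ) (m : ℕ) (hm : Odd m) :
    (∑ l : Fin m, PowerSeries.C ((-1 : ℝ) ^ (l : ℕ)) * rescale (((l : ℕ) : ℝ) * c) (exp ℝ)) *
      (rescale c (exp ℝ) + 1) = rescale ((m : ℝ) * c) (exp ℝ) + 1 := by
  set u : ℝ⟦X⟧ := rescale c (exp ℝ) with hu
  have h1 : ∀ l : ℕ, PowerSeries.C ((-1 : ℝ) ^ l) * rescale (((l : ℕ) : ℝ) * c) (exp ℝ)
      = (-u) ^ l := by
    intro l
    have h : (-u) ^ l = PowerSeries.C ((-1 : ℝ) ^ l) * u ^ l := by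
      rw [neg_pow u l, map_pow, map_neg, map_one]
    rw [h, ← rescale_exp_pow]
  have h2 : (∑ l : Fin m, PowerSeries.C ((-1 : ℝ) ^ (l : ℕ)) *
      rescale (((l : ℕ) : ℝ) * c) (exp ℝ)) = ∑ l ∈ Finset.range m, (-u) ^ l := by
    rw [Fin.sum_univ_eq_sum_range (fun l => PowerSeries.C ((-1 : ℝ) ^ l) *
      rescale ((l : ℝ) * c) (exp ℝ))]
    exact Finset.sum_congr rfl fun l _ => h1 l
  rw [h2, ← rescale_exp_pow]
  have h3 : (∑ l ∈ Finset.range m, (-u) ^ l) * ((-u) - 1) = (-u) ^ m - 1 := geom_sum_mul (-u) m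
  rw [hm.neg_pow] at h3
  have h4 : (∑ l ∈ Finset.range m, (-u) ^ l) * (u + 1)
      = -((∑ l ∈ Finset.range m, (-u) ^ l) * ((-u) - 1)) := by ring
  rw [h4, h3]
  ring

/-- Multivariate Raabe multiplication theorem, Euler case (`m` odd):
`m^{-n} E_n^{(k)}(m x | a)
  = Σ_{l₁,…,l_k=0}^{m-1} (-1)^{l₁+⋯+l_k} E_n^{(k)}(x + (1/m) Σ_i a_i l_i | a)`,
where `E_n^{(k)}(x | a)` has generating function `e^{x t} ∏_j (2/(e^{a_j t}+1))`. -/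
theorem statement_18 (m : ℕ) (hm0 : 0 < m) (hm : Odd m) (n k : ℕ) (hk : 0 < k)
    (a : Fin k → ℝ) (ha : ∀ j, a j ≠ 0) (x : ℝ) (E : ℝ → ℕ → ℝ)
    (hE : ∀ y : ℝ, (PowerSeries.mk fun i => E y i / (i.factorial : ℝ)) *
        (∏ j, (PowerSeries.rescale (a j) (PowerSeries.exp ℝ) + 1)) =
      PowerSeries.C ((2 : ℝ) ^ k) * PowerSeries.rescale y (PowerSeries.exp ℝ)) :
    (m : ℝ) ^ (-(n : ℤ)) * E ((m : ℝ) * x) n =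
      ∑ l : Fin k → Fin m,
        (-1 : ℝ) ^ (∑ i, (l i : ℕ)) *
          E (x + (1 / (m : ℝ)) * ∑ i, a i * ((l i : ℕ) : ℝ)) n := by
  have hmR : (m : ℝ) ≠ 0 := Nat.cast_ne_zero.mpr hm0.ne'
  set F : ℝ → ℝ⟦X⟧ := fun y => PowerSeries.mk fun i => E y i / (i.factorial : ℝ) with hF
  set P : ℝ⟦X⟧ := ∏ j, (rescale (a j) (exp ℝ) + 1) with hP
  set Q : ℝ⟦X⟧ := ∏ j, (rescale (a j / m) (exp ℝ) + 1) with hQ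
  -- constant coefficients
  have hcc : ∀ c : ℝ, constantCoeff (rescale c (exp ℝ) + 1) = 2 := by
    intro c
    rw [map_add, map_one, ← coeff_zero_eq_constantCoeff_apply, coeff_rescale, coeff_exp]
    norm_num
  have hPQ : P * Q ≠ 0 := by
    apply mul_ne_zero <;>
    · intro h0
      have := congrArg (constantCoeff) h0
      rw [map_prod, map_zero] at this
      simp only [hcc] at this
      norm_num at this
  -- H := rescale (1/m) (F (m x)) satisfies H * Q = C(2^k) * rescale x exp
  have hH : rescale (1 / (m : ℝ)) (F ((m : ℝ) * x)) * Q
      = PowerSeries.C ((2 : ℝ) ^ k) * rescale x (exp ℝ) := by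
    have h := congrArg (rescale (1 / (m : ℝ))) (hE ((m : ℝ) * x))
    rw [map_mul, map_mul, map_prod, rescale_C', rescale_rescale] at h
    have hx : (m : ℝ) * x * (1 / m) = x := by field_simp
    rw [hx] at h
    convert h using 3 with j
    rw [map_add, map_one, rescale_rescale]
    congr 2
    field_simp
  -- G * P
  set G : ℝ⟦X⟧ := ∑ l : Fin k → Fin m, PowerSeries.C ((-1 : ℝ) ^ (∑ i, (l i : ℕ))) *
      F (x + (1 / (m : ℝ)) * ∑ i, a i * ((l i : ℕ) : ℝ)) with hG
  have hGP : G * P = PowerSeries.C ((2 : ℝ) ^ k) * rescale x (exp ℝ) *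
      ∏ j, (∑ l : Fin m, PowerSeries.C ((-1 : ℝ) ^ (l : ℕ)) *
        rescale (((l : ℕ) : ℝ) * (a j / m)) (exp ℝ)) := by
    rw [hG, Finset.sum_mul]
    have hterm : ∀ l : Fin k → Fin m,
        (PowerSeries.C ((-1 : ℝ) ^ (∑ i, (l i : ℕ))) *
          F (x + (1 / (m : ℝ)) * ∑ i, a i * ((l i : ℕ) : ℝ))) * P
        = PowerSeries.C ((2 : ℝ) ^ k) * rescale x (exp ℝ) *
            ∏ i, (PowerSeries.C ((-1 : ℝ) ^ ((l i : ℕ))) *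
              rescale (((l i : ℕ) : ℝ) * (a i / m)) (exp ℝ)) := by
      intro l
      rw [mul_assoc, hE]
      have hsplit : rescale (x + (1 / (m : ℝ)) * ∑ i, a i * ((l i : ℕ) : ℝ)) (exp ℝ)
          = rescale x (exp ℝ) * ∏ i, rescale (((l i : ℕ) : ℝ) * (a i / m)) (exp ℝ) := by
        rw [prod_rescale_exp, exp_mul_exp_eq_exp_add]
        have harg : x + (1 / (m : ℝ)) * ∑ i, a i * ((l i : ℕ) : ℝ)
            = x + ∑ i, ((l i : ℕ) : ℝ) * (a i / m) := by
          rw [Finset.mul_sum]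
          exact congrArg (x + ·) (Finset.sum_congr rfl fun i _ => by ring)
        rw [harg]
      have hsign : PowerSeries.C ((-1 : ℝ) ^ (∑ i, (l i : ℕ)))
          = ∏ i, PowerSeries.C ((-1 : ℝ) ^ ((l i : ℕ))) := by
        rw [← map_prod, Finset.prod_pow_eq_pow_sum]
      rw [hsplit, hsign, Finset.prod_mul_distrib]
      ring
    rw [Finset.sum_congr rfl fun l _ => hterm l, ← Finset.mul_sum]
    congr 1
    exact (Fintype.prod_sum fun i (j : Fin m) => PowerSeries.C ((-1 : ℝ) ^ (j : ℕ)) *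
      rescale (((j : ℕ) : ℝ) * (a i / m)) (exp ℝ)).symm
  -- combine: G * (P * Q) = H * (P * Q)
  have hkey : G = rescale (1 / (m : ℝ)) (F ((m : ℝ) * x)) := by
    apply mul_right_cancel₀ hPQ
    rw [← mul_assoc, hGP, mul_assoc, ← Finset.prod_mul_distrib]
    have : ∀ j : Fin k, (∑ l : Fin m, PowerSeries.C ((-1 : ℝ) ^ (l : ℕ)) *
        rescale (((l : ℕ) : ℝ) * (a j / m)) (exp ℝ)) * (rescale (a j / m) (exp ℝ) + 1)
          = rescale (a j) (exp ℝ) + 1 := by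
      intro j
      rw [euler_geom (a j / m) m hm]
      congr 2
      field_simp
    rw [Finset.prod_congr rfl fun j _ => this j, ← hP]
    linear_combination (-P : ℝ⟦X⟧) * hH
  -- take coefficients
  have hc := congrArg (coeff n) hkey
  rw [hG, map_sum, coeff_rescale] at hc
  simp only [coeff_C_mul, hF, coeff_mk] at hc
  have hfac : ((n.factorial : ℝ)) ≠ 0 := Nat.cast_ne_zero.mpr n.factorial_ne_zero
  have h2 := congrArg (fun r : ℝ => r * (n.factorial : ℝ)) hc
  simp only [Finset.sum_mul, mul_assoc, div_mul_cancel₀ _ hfac] at h2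
  rw [zpow_neg, zpow_natCast, ← inv_pow, ← one_div]
  rw [mul_comm ((1/(m:ℝ))^n) (E ((m:ℝ)*x) n)] at h2 ⊢
  exact h2.symm
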